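/- For fixed γ > 0, the function Λ ↦ T_max(γ,Λ) is strictly decreasing in Λ on (0,∞). -/

import Mathlib

noncomputable def artanh (x : ℝ) : ℝ := (1/2) * Real.log ((1 + x) / (1 - x))

noncomputable def Tmax (γ Λ : ℝ) : ℝ :=
  let r := Real.sqrt |(γ / Λ) ^ 2 - 1|
  if Λ < γ then (1 / (Λ * r)) * Real.arctan r
  else if γ = Λ then 1 / Λ
  else (1 / (Λ * r)) * artanh r

open Real hiding artanh

/-- secant inequality for sin from strict concavity -/
lemma TmaxAux.sin_secant {a b : ℝ} (ha : 0 < a) (hab : a < b) (hb : b ≤ π) :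
    a * Real.sin b < b * Real.sin a := by
  have hb0 : 0 < b := ha.trans hab
  have hw1 : (0:ℝ) < 1 - a/b := by rw [sub_pos]; exact (div_lt_one hb0).2 hab
  have hw2 : (0:ℝ) < a/b := by positivity
  have hw3 : (1 - a/b) + a/b = 1 := by ring
  have h := strictConcaveOn_sin_Icc.2 (x := 0) (y := b)
    ⟨le_rfl, Real.pi_pos.le⟩ ⟨hb0.le, hb⟩ hb0.ne hw1 hw2 hw3
  simp only [smul_eq_mul, Real.sin_zero, mul_zero, zero_add] at h
  have h2 : a/b * b = a := by field_simp
  rw [h2] at h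
  have := (mul_lt_mul_iff_right₀ hb0).2 h
  calc a * Real.sin b = b * (a/b * Real.sin b) := by field_simp
    _ < b * Real.sin a := this

lemma TmaxAux.sinh_lt_mul_cosh {x : ℝ} (hx : 0 < x) : Real.sinh x < x * Real.cosh x := by
  have key : StrictMonoOn (fun y => y * Real.cosh y - Real.sinh y) (Set.Ici (0:ℝ)) := by
    apply strictMonoOn_of_deriv_pos (convex_Ici 0)
    · fun_prop
    · intro y hy
      rw [interior_Ici] at hy
      have hd : HasDerivAt (fun y => y * Real.cosh y - Real.sinh y)
          (1 * Real.cosh y + y * Real.sinh y - Real.cosh y) y :=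
        ((hasDerivAt_id y).mul (Real.hasDerivAt_cosh y)).sub (Real.hasDerivAt_sinh y)
      rw [hd.deriv]
      rw [Set.mem_Ioi] at hy
      have := Real.sinh_pos_iff.2 hy
      nlinarith
  have := key (Set.self_mem_Ici) (Set.mem_Ici.2 hx.le) hx
  simpa using this

lemma TmaxAux.sinh_secant {a b : ℝ} (ha : 0 < a) (hab : a < b) :
    b * Real.sinh a < a * Real.sinh b := by
  have key : StrictMonoOn (fun y => Real.sinh y / y) (Set.Ioi (0:ℝ)) := by
    apply strictMonoOn_of_deriv_pos (convex_Ioi 0)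
    · exact Real.continuous_sinh.continuousOn.div continuousOn_id
        (fun y hy => ne_of_gt hy)
    · intro y hy
      rw [interior_Ioi] at hy
      have hd : HasDerivAt (fun y => Real.sinh y / y)
          ((Real.cosh y * y - Real.sinh y * 1) / y ^ 2) y :=
        (Real.hasDerivAt_sinh y).div (hasDerivAt_id y) (ne_of_gt hy)
      rw [hd.deriv]
      rw [Set.mem_Ioi] at hy
      have := TmaxAux.sinh_lt_mul_cosh hy
      apply div_pos (by nlinarith) (by positivity)
  have h := key (Set.mem_Ioi.2 ha) (Set.mem_Ioi.2 (ha.trans hab)) hab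
  rw [div_lt_div_iff₀ ha (ha.trans hab)] at h
  nlinarith

lemma TmaxAux.artanh_pos {r : ℝ} (h0 : 0 < r) (h1 : r < 1) : 0 < artanh r := by
  unfold artanh
  have : (1:ℝ) < (1 + r) / (1 - r) := by
    rw [lt_div_iff₀ (by linarith)]; linarith
  have := Real.log_pos this
  linarith

lemma TmaxAux.artanh_lt {r₁ r₂ : ℝ} (h0 : 0 ≤ r₁) (h : r₁ < r₂) (h2 : r₂ < 1) :
    artanh r₁ < artanh r₂ := by
  unfold artanh
  have hq1 : (0:ℝ) < (1 + r₁) / (1 - r₁) := div_pos (by linarith) (by linarith)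
  have hlt : (1 + r₁) / (1 - r₁) < (1 + r₂) / (1 - r₂) := by
    rw [div_lt_div_iff₀ (by linarith) (by linarith)]; nlinarith
  have := Real.log_lt_log hq1 hlt
  linarith

lemma TmaxAux.sinh_artanh {r : ℝ} (h0 : 0 < r) (h1 : r < 1) :
    Real.sinh (artanh r) = r / Real.sqrt (1 - r ^ 2) := by
  have ha : (0:ℝ) < 1 + r := by linarith
  have hb : (0:ℝ) < 1 - r := by linarith
  set A := Real.sqrt (1 + r) with hA
  set B := Real.sqrt (1 - r) with hB
  have hApos : 0 < A := Real.sqrt_pos.2 ha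
  have hBpos : 0 < B := Real.sqrt_pos.2 hb
  have hA2 : A ^ 2 = 1 + r := Real.sq_sqrt ha.le
  have hB2 : B ^ 2 = 1 - r := Real.sq_sqrt hb.le
  have hq : (0:ℝ) < (1 + r) / (1 - r) := by positivity
  have hexp : Real.exp (artanh r) = A / B := by
    unfold artanh
    rw [mul_comm, ← Real.rpow_def_of_pos hq, ← Real.sqrt_eq_rpow,
      Real.sqrt_div ha.le]
  have hexpneg : Real.exp (-(artanh r)) = B / A := by
    rw [Real.exp_neg, hexp, inv_div]
  have hsq : Real.sqrt (1 - r ^ 2) = A * B := by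
    rw [show (1 : ℝ) - r ^ 2 = (1 + r) * (1 - r) by ring, Real.sqrt_mul ha.le]
  rw [Real.sinh_eq, hexp, hexpneg, hsq]
  field_simp
  linear_combination hA2 - hB2

/-- representation on the branch Λ < γ -/
lemma TmaxAux.rep_arctan {γ Λ : ℝ} (h0 : 0 < Λ) (h : Λ < γ) :
    0 < Real.arctan (Real.sqrt ((γ / Λ) ^ 2 - 1)) ∧
    Real.arctan (Real.sqrt ((γ / Λ) ^ 2 - 1)) < π / 2 ∧
    0 < Real.sin (Real.arctan (Real.sqrt ((γ / Λ) ^ 2 - 1))) ∧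
    Tmax γ Λ = Real.arctan (Real.sqrt ((γ / Λ) ^ 2 - 1)) /
      (γ * Real.sin (Real.arctan (Real.sqrt ((γ / Λ) ^ 2 - 1)))) := by
  have hγ : 0 < γ := h0.trans h
  have hu : 1 < γ / Λ := (one_lt_div h0).2 h
  have hupos : 0 < γ / Λ := by positivity
  set r := Real.sqrt ((γ / Λ) ^ 2 - 1) with hr
  have hrpos : 0 < r := Real.sqrt_pos.2 (by nlinarith)
  have hr2 : r ^ 2 = (γ / Λ) ^ 2 - 1 := Real.sq_sqrt (by nlinarith)
  have hθpos : 0 < Real.arctan r := by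
    have := Real.arctan_strictMono hrpos
    rwa [Real.arctan_zero] at this
  have hθlt : Real.arctan r < π / 2 := Real.arctan_lt_pi_div_two r
  have hsin : Real.sin (Real.arctan r) = r * Λ / γ := by
    rw [Real.sin_arctan]
    have : Real.sqrt (1 + r ^ 2) = γ / Λ := by
      rw [hr2, show (1:ℝ) + ((γ / Λ) ^ 2 - 1) = (γ / Λ) ^ 2 by ring,
        Real.sqrt_sq hupos.le]
    rw [this]
    field_simp
  have hsinpos : 0 < Real.sin (Real.arctan r) := by
    rw [hsin]; positivity
  refine ⟨hθpos, hθlt, hsinpos, ?_⟩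
  have habs : |(γ / Λ) ^ 2 - 1| = (γ / Λ) ^ 2 - 1 := abs_of_pos (by nlinarith)
  show (if Λ < γ then _ else _) = _
  rw [if_pos h]
  simp only [habs, ← hr, hsin]
  rw [show γ * (r * Λ / γ) = Λ * r by field_simp]
  ring

/-- representation on the branch γ < Λ -/
lemma TmaxAux.rep_artanh {γ Λ : ℝ} (hγ : 0 < γ) (h : γ < Λ) :
    0 < artanh (Real.sqrt (1 - (γ / Λ) ^ 2)) ∧
    0 < Real.sinh (artanh (Real.sqrt (1 - (γ / Λ) ^ 2))) ∧
    Tmax γ Λ = artanh (Real.sqrt (1 - (γ / Λ) ^ 2)) /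
      (γ * Real.sinh (artanh (Real.sqrt (1 - (γ / Λ) ^ 2)))) := by
  have h0 : 0 < Λ := hγ.trans h
  have hu : γ / Λ < 1 := (div_lt_one h0).2 h
  have hupos : 0 < γ / Λ := by positivity
  set r := Real.sqrt (1 - (γ / Λ) ^ 2) with hr
  have hrpos : 0 < r := Real.sqrt_pos.2 (by nlinarith)
  have hr2 : r ^ 2 = 1 - (γ / Λ) ^ 2 := Real.sq_sqrt (by nlinarith)
  have hrlt : r < 1 := by nlinarith [hr2, hrpos]
  have hspos : 0 < artanh r := TmaxAux.artanh_pos hrpos hrlt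
  have hsinh : Real.sinh (artanh r) = r * Λ / γ := by
    rw [TmaxAux.sinh_artanh hrpos hrlt]
    have : Real.sqrt (1 - r ^ 2) = γ / Λ := by
      rw [hr2, show (1:ℝ) - (1 - (γ / Λ) ^ 2) = (γ / Λ) ^ 2 by ring,
        Real.sqrt_sq hupos.le]
    rw [this]
    field_simp
  have hsinhpos : 0 < Real.sinh (artanh r) := by rw [hsinh]; positivity
  refine ⟨hspos, hsinhpos, ?_⟩
  have habs : |(γ / Λ) ^ 2 - 1| = 1 - (γ / Λ) ^ 2 := by
    rw [abs_of_neg (by nlinarith)]; ring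
  show (if Λ < γ then _ else _) = _
  rw [if_neg (by linarith), if_neg (by linarith)]
  simp only [habs, ← hr, hsinh]
  rw [show γ * (r * Λ / γ) = Λ * r by field_simp]
  ring

theorem Tmax_strictAnti (γ : ℝ) (hγ : 0 < γ) :
    StrictAntiOn (fun Λ => Tmax γ Λ) (Set.Ioi (0 : ℝ)) := by
  -- value at γ
  have hval : Tmax γ γ = 1 / γ := by
    show (if γ < γ then _ else _) = _
    rw [if_neg (lt_irrefl γ), if_pos rfl]
  -- left piece compared with 1/γ
  have H1 : ∀ a : ℝ, 0 < a → a < γ → 1 / γ < Tmax γ a := by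
    intro a ha hlt
    obtain ⟨hθpos, hθlt, hsinpos, heq⟩ := TmaxAux.rep_arctan ha hlt
    rw [heq, div_lt_div_iff₀ hγ (by positivity)]
    have := Real.sin_lt hθpos
    nlinarith
  -- right piece compared with 1/γ
  have H2 : ∀ b : ℝ, γ < b → Tmax γ b < 1 / γ := by
    intro b hlt
    obtain ⟨hspos, hsinhpos, heq⟩ := TmaxAux.rep_artanh hγ hlt
    rw [heq, div_lt_div_iff₀ (by positivity) hγ]
    have := Real.self_lt_sinh_iff.2 hspos
    nlinarith
  -- strict anti on left piece
  have H3 : ∀ a b : ℝ, 0 < a → a < b → b < γ → Tmax γ b < Tmax γ a := by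
    intro a b ha hab hb
    have hb0 : 0 < b := ha.trans hab
    obtain ⟨hθa, hθa2, hsa, hea⟩ := TmaxAux.rep_arctan ha (hab.trans hb)
    obtain ⟨hθb, hθb2, hsb, heb⟩ := TmaxAux.rep_arctan hb0 hb
    set ra := Real.sqrt ((γ / a) ^ 2 - 1)
    set rb := Real.sqrt ((γ / b) ^ 2 - 1)
    have hrlt : rb < ra := by
      apply Real.sqrt_lt_sqrt
      · have : 1 < γ / b := (one_lt_div hb0).2 hb
        nlinarith
      · have h1 : γ / b < γ / a := div_lt_div_of_pos_left hγ ha hab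
        have h2 : 0 < γ / b := by positivity
        nlinarith
    have hθ : Real.arctan rb < Real.arctan ra := Real.arctan_strictMono hrlt
    rw [hea, heb, div_lt_div_iff₀ (by positivity) (by positivity)]
    have key := TmaxAux.sin_secant hθb hθ
      (le_of_lt (hθa2.trans (half_lt_self Real.pi_pos)))
    nlinarith
  -- strict anti on right piece
  have H4 : ∀ a b : ℝ, γ < a → a < b → Tmax γ b < Tmax γ a := by
    intro a b ha hab
    obtain ⟨hsa, hsha, hea⟩ := TmaxAux.rep_artanh hγ ha
    obtain ⟨hsb, hshb, heb⟩ := TmaxAux.rep_artanh hγ (ha.trans hab)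
    set ra := Real.sqrt (1 - (γ / a) ^ 2)
    set rb := Real.sqrt (1 - (γ / b) ^ 2)
    have ha0 : 0 < a := hγ.trans ha
    have hb0 : 0 < b := ha0.trans hab
    have hrblt1 : rb < 1 := by
      have h2 : 0 < γ / b := by positivity
      have : rb ^ 2 = 1 - (γ / b) ^ 2 := Real.sq_sqrt (by
        have : γ / b < 1 := (div_lt_one hb0).2 (ha.trans hab)
        nlinarith)
      nlinarith [Real.sqrt_nonneg (1 - (γ / b) ^ 2)]
    have hrlt : ra < rb := by
      apply Real.sqrt_lt_sqrt
      · have : γ / a < 1 := (div_lt_one ha0).2 ha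
        have : 0 < γ / a := by positivity
        nlinarith [(div_lt_one ha0).2 ha]
      · have h1 : γ / b < γ / a := div_lt_div_of_pos_left hγ ha0 hab
        have h2 : 0 < γ / b := by positivity
        nlinarith
    have hs : artanh ra < artanh rb :=
      TmaxAux.artanh_lt (Real.sqrt_nonneg _) hrlt hrblt1
    rw [hea, heb, div_lt_div_iff₀ (by positivity) (by positivity)]
    have key := TmaxAux.sinh_secant hsa hs
    nlinarith
  -- glue
  intro a ha b hb hab
  simp only [Set.mem_Ioi] at ha hb
  show Tmax γ b < Tmax γ a
  rcases lt_trichotomy b γ with h1 | h1 | h1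
  · exact H3 a b ha hab h1
  · subst h1
    rw [hval]
    exact H1 a ha hab
  · rcases lt_trichotomy a γ with h2 | h2 | h2
    · exact (H2 b h1).trans (H1 a ha h2)
    · subst h2
      rw [hval]
      exact H2 b h1
    · exact H4 a b h2 hab
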